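/- Let c ∈ ℝ, r > 0 and t₀ ∈ ℝ with t₀ − r + c > 0, and let τ : [t₀, ∞) → [0, r] be a continuous function such that t + c − τ(t) > 0 for all t ≥ t₀. Then every solution x of x'(t) = x(t−τ(t))/(t + c − τ(t)) satisfies x(t) = O(t) and x'(t) = o(t) as t → ∞. -/

import Mathlib

open Filter Topology

/- For the linear retarded equation with variable delay
`x'(t) = x(t - τ(t))/(t + c - τ(t))`, every solution `x` satisfies `x(t) = O(t)`
(i.e. `|x(t)| ≤ C·t` for some constant `C` and all sufficiently large `t`) and
`x'(t) = o(t)` (i.e. `x'(t)/t → 0`) as `t → ∞`. -/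
theorem stmt12
    (c r t₀ : ℝ) (hr : 0 < r) (hc : 0 < t₀ - r + c)
    (τ : ℝ → ℝ)
    (hτc : ContinuousOn τ (Set.Ici t₀))
    (hτr : ∀ t, t₀ ≤ t → τ t ∈ Set.Icc 0 r)
    (hpos : ∀ t, t₀ ≤ t → 0 < t + c - τ t)
    (x x' : ℝ → ℝ)
    (hxc : ContinuousOn x (Set.Ici (t₀ - r)))
    (hx : ∀ t, t₀ ≤ t → HasDerivWithinAt x (x' t) (Set.Ici t₀) t)
    (hxeq : ∀ t, t₀ ≤ t → x' t = x (t - τ t) / (t + c - τ t)) :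
    (∃ C : ℝ, ∀ᶠ t in atTop, |x t| ≤ C * t) ∧
    Tendsto (fun t => x' t / t) atTop (𝓝 0) := by
  -- bound on the initial interval
  have hne : (Set.Icc (t₀ - r) t₀).Nonempty := ⟨t₀, by constructor <;> linarith⟩
  obtain ⟨m, hm, hmax⟩ := isCompact_Icc.exists_isMaxOn hne
    ((hxc.mono (Set.Icc_subset_Ici_self)).abs)
  set M₀ : ℝ := |x m| with hM₀
  have hM₀0 : 0 ≤ M₀ := abs_nonneg _
  set K : ℝ := (M₀ + 1) / (t₀ - r + c) with hK
  have hKpos : 0 < K := div_pos (by linarith) hc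
  have hKmul : K * (t₀ - r + c) = M₀ + 1 := by rw [hK, div_mul_cancel₀ _ hc.ne']
  have hbase : ∀ s ∈ Set.Icc (t₀ - r) t₀, |x s| < K * (s + c) := by
    intro s hs
    have h1 : |x s| ≤ M₀ := hmax hs
    have h2 : K * (t₀ - r + c) ≤ K * (s + c) := by
      apply mul_le_mul_of_nonneg_left _ hKpos.le
      linarith [hs.1]
    linarith
  -- the main growth bound
  have main : ∀ t, t₀ - r ≤ t → |x t| ≤ K * (t + c) := by
    by_contra hcon
    push_neg at hcon
    set F : Set ℝ := {t | t₀ - r ≤ t ∧ K * (t + c) < |x t|} with hF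
    have hFne : F.Nonempty := by
      obtain ⟨t, ht1, ht2⟩ := hcon
      exact ⟨t, ht1, ht2⟩
    have hFbdd : BddBelow F := ⟨t₀ - r, fun t ht => ht.1⟩
    set T : ℝ := sInf F with hT
    have hFt₀ : ∀ t ∈ F, t₀ < t := by
      intro t ht
      by_contra h
      push_neg at h
      exact absurd (hbase t ⟨ht.1, h⟩) (not_lt.2 ht.2.le)
    have hTt₀ : t₀ ≤ T := le_csInf hFne fun t ht => (hFt₀ t ht).le
    have hTr : t₀ - r < T := by linarith
    have hxT : ContinuousAt x T := hxc.continuousAt (Ici_mem_nhds hTr)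
    -- nonstrict bound below T
    have hbelow : ∀ u, t₀ - r ≤ u → u < T → |x u| ≤ K * (u + c) := by
      intro u hu1 hu2
      by_contra h
      push_neg at h
      exact absurd (csInf_le hFbdd ⟨hu1, h⟩) (not_le.2 hu2)
    -- bound at T by left-continuity
    have hatT : |x T| ≤ K * (T + c) := by
      have ht1 : Filter.Tendsto (fun u => |x u|) (𝓝[<] T) (𝓝 |x T|) :=
        (hxT.continuousWithinAt.abs)
      have ht2 : Filter.Tendsto (fun u => K * (u + c)) (𝓝[<] T) (𝓝 (K * (T + c))) := by
        exact ((continuous_const.mul (continuous_id.add continuous_const)).tendsto T).mono_left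
          nhdsWithin_le_nhds
      refine le_of_tendsto_of_tendsto ht1 ht2 ?_
      filter_upwards [Ioo_mem_nhdsLT hTr] with u hu
      exact hbelow u hu.1.le hu.2
    have hleT : ∀ u ∈ Set.Icc (t₀ - r) T, |x u| ≤ K * (u + c) := by
      intro u hu
      rcases lt_or_eq_of_le hu.2 with h | h
      · exact hbelow u hu.1 h
      · rw [h]; exact hatT
    -- derivative bound on [t₀, T]
    have hderiv : ∀ s ∈ Set.Icc t₀ T, |x' s| ≤ K := by
      intro s hs
      have hs0 := hs.1
      have hτs := hτr s hs0
      have hd : 0 < s + c - τ s := hpos s hs0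
      have hmem : s - τ s ∈ Set.Icc (t₀ - r) T := by
        constructor
        · linarith [hτs.2]
        · linarith [hτs.1, hs.2]
      have hb := hleT _ hmem
      rw [hxeq s hs0, abs_div, abs_of_pos hd, div_le_iff₀ hd]
      have : K * (s - τ s + c) = K * (s + c - τ s) := by ring_nf
      linarith [this ▸ hb]
    -- mean value inequality
    have hmvt : |x T - x t₀| ≤ K * |T - t₀| := by
      have := Convex.norm_image_sub_le_of_norm_hasDerivWithin_le
        (f := x) (f' := x') (s := Set.Icc t₀ T)
        (fun s hs => (hx s hs.1).mono (Set.Icc_subset_Ici_self))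
        (fun s hs => hderiv s hs) (convex_Icc _ _)
        ⟨le_refl t₀, hTt₀⟩ ⟨hTt₀, le_refl T⟩
      simpa [Real.norm_eq_abs] using this
    have hTinF : K * (T + c) ≤ |x T| := by
      obtain ⟨u, _, hulim, humem⟩ := exists_seq_tendsto_sInf hFne hFbdd
      have h1 : Filter.Tendsto (fun n => |x (u n)|) atTop (𝓝 |x T|) :=
        (hxT.tendsto.comp hulim).abs
      have h2 : Filter.Tendsto (fun n => K * (u n + c)) atTop (𝓝 (K * (T + c))) :=
        ((continuous_const.mul (continuous_id.add continuous_const)).tendsto T).comp hulim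
      exact le_of_tendsto_of_tendsto h2 h1
        (Filter.Eventually.of_forall fun n => (humem n).2.le)
    have h0 : |x t₀| < K * (t₀ + c) := hbase t₀ ⟨by linarith, le_refl _⟩
    have habsT : |T - t₀| = T - t₀ := abs_of_nonneg (by linarith)
    have : |x T| ≤ |x t₀| + K * (T - t₀) := by
      have := abs_sub_abs_le_abs_sub (x T) (x t₀)
      rw [habsT] at hmvt
      linarith
    nlinarith
  -- derivative is bounded
  have hderivK : ∀ t, t₀ ≤ t → |x' t| ≤ K := by
    intro t ht
    have hτt := hτr t ht
    have hd : 0 < t + c - τ t := hpos t ht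
    have hmem : t₀ - r ≤ t - τ t := by linarith [hτt.2]
    have hb := main _ hmem
    rw [hxeq t ht, abs_div, abs_of_pos hd, div_le_iff₀ hd]
    have h : K * (t - τ t + c) = K * (t + c - τ t) := by ring_nf
    linarith [h ▸ hb]
  constructor
  · refine ⟨K * (1 + |c|), ?_⟩
    filter_upwards [eventually_ge_atTop (max 1 (t₀ - r))] with t ht
    have ht1 : (1 : ℝ) ≤ t := le_trans (le_max_left _ _) ht
    have ht2 : t₀ - r ≤ t := le_trans (le_max_right _ _) ht
    have := main t ht2
    have hcabs : c ≤ |c| := le_abs_self c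
    have h3 : 0 ≤ K * |c| * (t - 1) :=
      mul_nonneg (mul_nonneg hKpos.le (abs_nonneg c)) (by linarith)
    nlinarith [h3, mul_le_mul_of_nonneg_left hcabs hKpos.le]
  · have hK0 : Filter.Tendsto (fun t : ℝ => K / t) atTop (𝓝 0) :=
      tendsto_const_nhds.div_atTop tendsto_id
    have hK0' : Filter.Tendsto (fun t : ℝ => -(K / t)) atTop (𝓝 0) := by
      simpa using hK0.neg
    refine tendsto_of_tendsto_of_tendsto_of_le_of_le' hK0' hK0 ?_ ?_
    · filter_upwards [eventually_ge_atTop (max t₀ 1)] with t ht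
      have ht1 : t₀ ≤ t := le_trans (le_max_left _ _) ht
      have ht2 : (1 : ℝ) ≤ t := le_trans (le_max_right _ _) ht
      have h := hderivK t ht1
      have := neg_abs_le (x' t)
      rw [← neg_div, div_le_div_iff₀ (by linarith) (by linarith)]
      nlinarith [mul_nonneg (by linarith : (0:ℝ) ≤ x' t + K) (by linarith : (0:ℝ) ≤ t)]
    · filter_upwards [eventually_ge_atTop (max t₀ 1)] with t ht
      have ht1 : t₀ ≤ t := le_trans (le_max_left _ _) ht
      have ht2 : (1 : ℝ) ≤ t := le_trans (le_max_right _ _) ht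
      have h := hderivK t ht1
      have := le_abs_self (x' t)
      rw [div_le_div_iff₀ (by linarith) (by linarith)]
      nlinarith [mul_nonneg (by linarith : (0:ℝ) ≤ K - x' t) (by linarith : (0:ℝ) ≤ t)]
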